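/- If X is a Tychonoff space such that every sequence (f_n) of continuous functions converging in C_c(X) to some g is equicontinuous at every point, and (U_n) is a sequence of nonempty open subsets of X such that every choice x_n ∈ U_n has no subsequence with compact closure, and (f_n) are continuous functions f_n : X → [0,1] with f_n = 0 outside U_n, then f_n → 0 in the compact-open topology. -/

import Mathlib

open Filter Topology Set

def SelectivelyOmegaBounded (X : Type*) [TopologicalSpace X] : Prop :=
  ∀ U : ℕ → Set X, (∀ n, IsOpen (U n)) → (∀ n, (U n).Nonempty) →
    ∃ x : ℕ → X, (∀ n, x n ∈ U n) ∧
      ∃ φ : ℕ → ℕ, StrictMono φ ∧ IsCompact (closure (Set.range (x ∘ φ)))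

def Pseudocompact (X : Type*) [TopologicalSpace X] : Prop :=
  ∀ f : C(X, ℝ), ∃ M : ℝ, ∀ x, |f x| ≤ M

def EquicontinuousSet {X : Type*} [TopologicalSpace X] (S : Set C(X, ℝ)) : Prop :=
  Equicontinuous (fun f : S => ⇑(f : C(X, ℝ)))

def AscoliSpace (X : Type*) [TopologicalSpace X] : Prop :=
  ∀ S : Set C(X, ℝ), IsCompact S → EquicontinuousSet S

def SeqAscoliSpace (X : Type*) [TopologicalSpace X] : Prop :=
  ∀ (f : ℕ → C(X, ℝ)) (g : C(X, ℝ)), Tendsto f atTop (𝓝 g) →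
    EquicontinuousSet (insert g (Set.range f))

theorem stmt13 (X : Type*) [TopologicalSpace X] [T35Space X]
    (hseq : ∀ (f : ℕ → C(X, ℝ)) (g : C(X, ℝ)), Tendsto f atTop (𝓝 g) →
      ∀ x : X, EquicontinuousAt (fun n => ⇑(f n)) x)
    (U : ℕ → Set X) (hUo : ∀ n, IsOpen (U n)) (hUne : ∀ n, (U n).Nonempty)
    (hbad : ∀ x : ℕ → X, (∀ n, x n ∈ U n) →
      ¬ ∃ φ : ℕ → ℕ, StrictMono φ ∧ IsCompact (closure (Set.range (x ∘ φ))))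
    (f : ℕ → C(X, ℝ)) (hf01 : ∀ n x, f n x ∈ Set.Icc (0 : ℝ) 1)
    (hfsupp : ∀ n, ∀ x ∉ U n, f n x = 0) :
    Tendsto f atTop (𝓝 0) := by
  rw [ContinuousMap.tendsto_iff_forall_isCompact_tendstoUniformlyOn]
  intro K hK
  -- only finitely many U n meet K
  have hfin : {n | (U n ∩ K).Nonempty}.Finite := by
    by_contra hinf
    replace hinf : {n | (U n ∩ K).Nonempty}.Infinite := hinf
    classical
    set x : ℕ → X := fun n => if h : (U n ∩ K).Nonempty then h.choose else (hUne n).choose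
      with hx
    have hxU : ∀ n, x n ∈ U n := by
      intro n
      by_cases h : (U n ∩ K).Nonempty
      · simp only [hx, dif_pos h]; exact h.choose_spec.1
      · simp only [hx, dif_neg h]; exact (hUne n).choose_spec
    have hxK : ∀ n ∈ {n | (U n ∩ K).Nonempty}, x n ∈ K := by
      intro n h
      have h' : (U n ∩ K).Nonempty := h
      simp only [hx, dif_pos h']
      exact h'.choose_spec.2
    refine hbad x hxU ⟨Nat.nth (fun n => (U n ∩ K).Nonempty), Nat.nth_strictMono hinf, ?_⟩
    have hsub : Set.range (x ∘ Nat.nth (fun n => (U n ∩ K).Nonempty)) ⊆ K := by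
      rintro _ ⟨n, rfl⟩
      exact hxK _ (Nat.nth_mem_of_infinite hinf n)
    have hcl : closure (Set.range (x ∘ Nat.nth (fun n => (U n ∩ K).Nonempty))) ⊆ K :=
      closure_minimal hsub hK.isClosed
    exact hK.of_isClosed_subset isClosed_closure hcl
  -- eventually f n = 0 on K
  have hev : ∀ᶠ n in atTop, ∀ z ∈ K, f n z = 0 := by
    rcases hfin.bddAbove with ⟨N, hN⟩
    filter_upwards [eventually_gt_atTop N] with n hn z hz
    refine hfsupp n z fun hzU => ?_
    exact absurd (hN (⟨z, hzU, hz⟩ : (U n ∩ K).Nonempty)) (not_le.mpr hn)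
  rw [Metric.tendstoUniformlyOn_iff]
  intro ε hε
  filter_upwards [hev] with n hn z hz
  simp [hn z hz, hε]
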